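/- arXiv:1101.0303 — 2 statements merged into one kernel-verified Lean document; each statement's English description precedes it below -/
import Mathlib

section
/- If closed subspaces X and Y of a Hilbert space H commute (i.e., their projections commute), then for any closed subspace Z commuting with both, the distributive law Z ∩ (X ∨ Y) = (Z ∩ X) ∨ (Z ∩ Y) holds, where X ∨ Y denotes the closed span of X ∪ Y. -/
noncomputable section

variable {H : Type*} [NormedAddCommGroup H] [InnerProductSpace ℂ H]

/-- The set of atomic propositions (closed subspaces) satisfied at a state:
`L(ψ) = {Z ∈ AP | ψ ∈ Z}`. -/
def QLabel (AP : Set (Submodule ℂ H)) (ψ : H) : Set (Submodule ℂ H) :=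
  {Z | Z ∈ AP ∧ ψ ∈ Z}

/-- Satisfaction: `ψ ⊨ X` iff `⋂ {Z ∈ AP | ψ ∈ Z} ⊆ X`. -/
def QSat (AP : Set (Submodule ℂ H)) (ψ : H) (X : Submodule ℂ H) : Prop :=
  sInf (QLabel AP ψ) ≤ X

/-- Two closed subspaces commute (their orthogonal projections commute); this is the
standard lattice-theoretic characterization `X = (X ⊓ Y) ⊔ (X ⊓ Yᗮ)`, which for closed
subspaces of a Hilbert space is equivalent to `P_X P_Y = P_Y P_X`. -/
def QCommutes (X Y : Submodule ℂ H) : Prop :=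
  X = (X ⊓ Y) ⊔ (X ⊓ Yᗮ)

/-- The join of two subspaces: the smallest closed subspace containing their union. -/
def QJoin (X Y : Submodule ℂ H) : Submodule ℂ H :=
  (X ⊔ Y).topologicalClosure

/-- The assumptions on `AP` of Lemma 3 (commut1): elements pairwise commute, and `AP`
is closed under join. -/
def APGood (AP : Set (Submodule ℂ H)) : Prop :=
  (∀ Z₁ ∈ AP, ∀ Z₂ ∈ AP, QCommutes Z₁ Z₂) ∧
  (∀ Z₁ ∈ AP, ∀ Z₂ ∈ AP, QJoin Z₁ Z₂ ∈ AP)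

variable {Act : Type*}

/-- `φ` is reachable from `ψ` by a finite sequence of the unitaries `U_α`. -/
def QReach (U : Act → (H ≃ₗᵢ[ℂ] H)) (ψ φ : H) : Prop :=
  ∃ l : List Act, φ = l.foldl (fun x α => U α x) ψ

/-- A path of the quantum automaton `(Act, U, I)`. -/
def QPath (U : Act → (H ≃ₗᵢ[ℂ] H)) (I : Submodule ℂ H) (π : ℕ → H) : Prop :=
  π 0 ∈ I ∧ ∀ n, ∃ α, π (n + 1) = U α (π n)

/-- `A ⊨ inv X`: every state reachable from an initial state satisfies `X`. -/
def QInv (U : Act → (H ≃ₗᵢ[ℂ] H)) (I : Submodule ℂ H)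
    (AP : Set (Submodule ℂ H)) (X : Submodule ℂ H) : Prop :=
  ∀ ψ ∈ I, ∀ φ, QReach U ψ φ → QSat AP φ X

/-- `A ⊨ pers X`: along every path, eventually all states satisfy `X`. -/
def QPers (U : Act → (H ≃ₗᵢ[ℂ] H)) (I : Submodule ℂ H)
    (AP : Set (Submodule ℂ H)) (X : Submodule ℂ H) : Prop :=
  ∀ π : ℕ → H, QPath U I π → ∃ m, ∀ n ≥ m, QSat AP (π n) X


/-- If `X = (X ⊓ Y) ⊔ (X ⊓ Yᗮ)` then `P_Y ∘ P_X = P_{X ⊓ Y}`. -/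
theorem aux_proj_inf [CompleteSpace H] (X Y : Submodule ℂ H)
    [Submodule.HasOrthogonalProjection X] [Submodule.HasOrthogonalProjection Y] [Submodule.HasOrthogonalProjection (X ⊓ Y)]
    (hXY : X = (X ⊓ Y) ⊔ (X ⊓ Yᗮ)) (v : H) :
    (Submodule.starProjection Y (Submodule.starProjection X v) : H)
      = (Submodule.starProjection (X ⊓ Y) v : H) := by
  have hx : ((Submodule.starProjection X v : H)) ∈ (X ⊓ Y) ⊔ (X ⊓ Yᗮ) := by
    rw [← hXY]; exact Submodule.starProjection_apply_mem X v
  obtain ⟨a, ha, b, hb, hab⟩ := Submodule.mem_sup.1 hx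
  have hPY : (Submodule.starProjection Y (Submodule.starProjection X v) : H) = a :=
    Submodule.eq_starProjection_of_mem_orthogonal' ha.2 hb.2 hab.symm
  have hPinf : (Submodule.starProjection (X ⊓ Y) v : H) = a := by
    refine Submodule.eq_starProjection_of_mem_orthogonal ha ?_
    have h1 : v - (Submodule.starProjection X v : H) ∈ (X ⊓ Y)ᗮ :=
      Submodule.orthogonal_le inf_le_left (Submodule.sub_starProjection_mem_orthogonal v)
    have h2 : b ∈ (X ⊓ Y)ᗮ := Submodule.orthogonal_le inf_le_right hb.2
    have : v - a = (v - (Submodule.starProjection X v : H)) + b := by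
      rw [← hab]; abel
    rw [this]; exact Submodule.add_mem _ h1 h2
  rw [hPY, hPinf]

/-- Projections of commuting closed subspaces commute. -/
theorem aux_comm [CompleteSpace H] (X Y : Submodule ℂ H)
    [Submodule.HasOrthogonalProjection X] [Submodule.HasOrthogonalProjection Y] [Submodule.HasOrthogonalProjection (X ⊓ Y)]
    (hXY : X = (X ⊓ Y) ⊔ (X ⊓ Yᗮ)) (v : H) :
    (Submodule.starProjection X (Submodule.starProjection Y v) : H)
      = (Submodule.starProjection Y (Submodule.starProjection X v) : H) := by
  rw [aux_proj_inf X Y hXY v]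
  refine ext_inner_right ℂ fun w => ?_
  rw [Submodule.inner_starProjection_left_eq_right, Submodule.inner_starProjection_left_eq_right,
    aux_proj_inf X Y hXY w, ← Submodule.inner_starProjection_left_eq_right]

/-- Every element of `QJoin X Y` equals `P_X ψ + (P_Y ψ - P_Y P_X ψ)`. -/
theorem aux_join_id [CompleteSpace H] (X Y : Submodule ℂ H)
    [Submodule.HasOrthogonalProjection X] [Submodule.HasOrthogonalProjection Y] [Submodule.HasOrthogonalProjection (X ⊓ Y)]
    (hXY : X = (X ⊓ Y) ⊔ (X ⊓ Yᗮ)) {ψ : H} (hψ : ψ ∈ QJoin X Y) :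
    ψ = (Submodule.starProjection X ψ : H) +
        ((Submodule.starProjection Y ψ : H)
          - (Submodule.starProjection Y (Submodule.starProjection X ψ) : H)) := by
  set PX : H →L[ℂ] H := Submodule.starProjection X with hPX
  set PY : H →L[ℂ] H := Submodule.starProjection Y with hPY
  set T : H →L[ℂ] H := PX + PY - PY.comp PX with hT
  set K : Submodule ℂ H := LinearMap.eqLocus (T : H →ₗ[ℂ] H) (LinearMap.id) with hK
  have hclosed : IsClosed (K : Set H) := by
    have : (K : Set H) = {x | T x = x} := rfl
    rw [this]
    exact isClosed_eq T.continuous continuous_id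
  have hsup : X ⊔ Y ≤ K := by
    refine sup_le (fun x hx => ?_) (fun y hy => ?_)
    · have h1 : (Submodule.starProjection X x : H) = x := Submodule.starProjection_eq_self_iff.2 hx
      show T x = x
      simp [hT, hPX, hPY, h1]
    · have h1 : (Submodule.starProjection Y y : H) = y := Submodule.starProjection_eq_self_iff.2 hy
      have h2 : (Submodule.starProjection Y (Submodule.starProjection X y) : H)
          = (Submodule.starProjection X y : H) := by
        rw [← aux_comm X Y hXY y, h1]
      show T y = y
      simp [hT, hPX, hPY, h1, h2]
  have hmem : ψ ∈ K := (X ⊔ Y).topologicalClosure_minimal hsup hclosed hψ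
  have h : (Submodule.starProjection X ψ : H) + (Submodule.starProjection Y ψ : H)
      - (Submodule.starProjection Y (Submodule.starProjection X ψ) : H) = ψ := by
    have ht : T ψ = ψ := hmem
    simpa [hT, hPX, hPY] using ht
  conv_lhs => rw [← h]
  abel

/-- distributivity for pairwise commuting closed subspaces:
`Z ⊓ (X ∨ Y) = (Z ⊓ X) ∨ (Z ⊓ Y)`. -/
theorem stmt2 [CompleteSpace H] (X Y Z : Submodule ℂ H)
    (hX : IsClosed (X : Set H)) (hY : IsClosed (Y : Set H)) (hZ : IsClosed (Z : Set H))
    (hXY : QCommutes X Y) (hZX : QCommutes Z X) (hZY : QCommutes Z Y) :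
    Z ⊓ QJoin X Y = QJoin (Z ⊓ X) (Z ⊓ Y) := by
  haveI : CompleteSpace X := hX.completeSpace_coe
  haveI : CompleteSpace Y := hY.completeSpace_coe
  haveI : CompleteSpace Z := hZ.completeSpace_coe
  haveI : CompleteSpace (X ⊓ Y : Submodule ℂ H) := by
    have : IsClosed ((X ⊓ Y : Submodule ℂ H) : Set H) := by
      rw [Submodule.coe_inf]; exact hX.inter hY
    exact this.completeSpace_coe
  haveI : CompleteSpace (Z ⊓ X : Submodule ℂ H) := by
    have : IsClosed ((Z ⊓ X : Submodule ℂ H) : Set H) := by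
      rw [Submodule.coe_inf]; exact hZ.inter hX
    exact this.completeSpace_coe
  haveI : CompleteSpace (Z ⊓ Y : Submodule ℂ H) := by
    have : IsClosed ((Z ⊓ Y : Submodule ℂ H) : Set H) := by
      rw [Submodule.coe_inf]; exact hZ.inter hY
    exact this.completeSpace_coe
  refine le_antisymm (fun ψ hψ => ?_) ?_
  · obtain ⟨hψZ, hψJ⟩ := hψ
    have hZψ : (Submodule.starProjection Z ψ : H) = ψ := Submodule.starProjection_eq_self_iff.2 hψZ
    -- the two pieces
    set a : H := (Submodule.starProjection X ψ : H) with ha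
    set b : H := (Submodule.starProjection Y ψ : H)
      - (Submodule.starProjection Y (Submodule.starProjection X ψ) : H) with hb
    have haX : a ∈ X := Submodule.starProjection_apply_mem _ _
    have haZ : a ∈ Z := by
      have : a = (Submodule.starProjection Z (Submodule.starProjection X ψ) : H) := by
        rw [aux_comm Z X hZX, hZψ]
      rw [this]; exact Submodule.starProjection_apply_mem _ _
    have hPYψZ : (Submodule.starProjection Y ψ : H) ∈ Z := by
      have : (Submodule.starProjection Y ψ : H)
          = (Submodule.starProjection Z (Submodule.starProjection Y ψ) : H) := by
        rw [aux_comm Z Y hZY, hZψ]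
      rw [this]; exact Submodule.starProjection_apply_mem _ _
    have hPYXψZ : (Submodule.starProjection Y (Submodule.starProjection X ψ) : H) ∈ Z := by
      have h1 : (Submodule.starProjection X ψ : H)
          = (Submodule.starProjection X (Submodule.starProjection Z ψ) : H) := by rw [hZψ]
      have : (Submodule.starProjection Y (Submodule.starProjection X ψ) : H)
          = (Submodule.starProjection Z
              (Submodule.starProjection Y (Submodule.starProjection X ψ)) : H) := by
        conv_lhs => rw [h1, ← aux_comm Z X hZX, ← aux_comm Z Y hZY]
      rw [this]; exact Submodule.starProjection_apply_mem _ _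
    have hbZY : b ∈ Z ⊓ Y := by
      refine Submodule.mem_inf.2 ⟨Submodule.sub_mem Z hPYψZ hPYXψZ, ?_⟩
      exact Submodule.sub_mem Y (Submodule.starProjection_apply_mem _ _) (Submodule.starProjection_apply_mem _ _)
    have hdecomp : ψ = a + b := aux_join_id X Y hXY hψJ
    have : ψ ∈ (Z ⊓ X) ⊔ (Z ⊓ Y) :=
      Submodule.mem_sup.2 ⟨a, Submodule.mem_inf.2 ⟨haZ, haX⟩, b, hbZY, hdecomp.symm⟩
    exact Submodule.le_topologicalClosure _ this
  · refine Submodule.topologicalClosure_minimal _ ?_ ?_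
    · refine sup_le (le_inf inf_le_left ?_) (le_inf inf_le_left ?_)
      · exact le_trans inf_le_right (le_trans le_sup_left (Submodule.le_topologicalClosure _))
      · exact le_trans inf_le_right (le_trans le_sup_right (Submodule.le_topologicalClosure _))
    · have : ((Z ⊓ QJoin X Y : Submodule ℂ H) : Set H)
          = (Z : Set H) ∩ (QJoin X Y : Set H) := Submodule.coe_inf
      rw [this]
      exact hZ.inter (Submodule.isClosed_topologicalClosure _)
end
end

section
/- In the Hilbert space l₂ of two-sided square-summable sequences with orthonormal basis {|n⟩ : n ∈ ℤ}, the translation operator U₊ defined by U₊|n⟩ = |n+1⟩ is unitary. For the quantum automaton A with single action U₊ and initial space I = span{|0⟩}, and AP = {[k), (k−1], l₂} where [k) = closed span{|n⟩ : n ≥ k} and (k−1] = closed span{|n⟩ : n ≤ k−1} for a fixed integer k > 0: A ⊨ pers [k) holds but A ⊨ inv [k) does not hold. -/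
noncomputable section

variable {H : Type*} [NormedAddCommGroup H] [InnerProductSpace ℂ H]

variable {Act : Type*}

/-- The Hilbert space `l₂` of two-sided square-summable sequences. -/
abbrev l2Z : Type := lp (fun _ : ℤ => ℂ) 2

/-- The basis vector `|n⟩` of `l₂`. -/
noncomputable def ket (n : ℤ) : l2Z := lp.single 2 n (1 : ℂ)


abbrev l2Z' : Type := lp (fun _ : ℤ => ℂ) 2

lemma two_toReal_pos : 0 < (2 : ENNReal).toReal := by norm_num

lemma summ_shift (g : ℤ → ℝ) (h : Summable g) : Summable fun m : ℤ => g (m - 1) :=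
  (Equiv.summable_iff (Equiv.subRight (1 : ℤ)) (f := g)).2 h

lemma summ_shift' (g : ℤ → ℝ) (h : Summable g) : Summable fun m : ℤ => g (m + 1) :=
  (Equiv.summable_iff (Equiv.addRight (1 : ℤ)) (f := g)).2 h

lemma memℓp_shift (f : l2Z') : Memℓp (fun m : ℤ => f (m - 1)) 2 := by
  apply memℓp_gen
  exact summ_shift (fun n => ‖f n‖ ^ (2 : ENNReal).toReal)
    ((memℓp_gen_iff two_toReal_pos).1 (lp.memℓp f))

lemma memℓp_shift' (f : l2Z') : Memℓp (fun m : ℤ => f (m + 1)) 2 := by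
  apply memℓp_gen
  exact summ_shift' (fun n => ‖f n‖ ^ (2 : ENNReal).toReal)
    ((memℓp_gen_iff two_toReal_pos).1 (lp.memℓp f))

noncomputable def shiftU : l2Z' ≃ₗᵢ[ℂ] l2Z' where
  toFun f := ⟨fun m => f (m - 1), memℓp_shift f⟩
  invFun f := ⟨fun m => f (m + 1), memℓp_shift' f⟩
  map_add' f g := by apply lp.ext; funext m; rfl
  map_smul' c f := by apply lp.ext; funext m; rfl
  left_inv f := by apply lp.ext; funext m; show f (m + 1 - 1) = f m; rw [add_sub_cancel_right]
  right_inv f := by apply lp.ext; funext m; show f (m - 1 + 1) = f m; rw [sub_add_cancel]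
  norm_map' f := by
    have h1 := lp.hasSum_norm two_toReal_pos (⟨fun m => f (m - 1), memℓp_shift f⟩ : l2Z')
    have h2 := lp.hasSum_norm two_toReal_pos f
    have h3 : HasSum (fun m : ℤ => ‖f (m - 1)‖ ^ (2 : ENNReal).toReal)
        (‖f‖ ^ (2 : ENNReal).toReal) :=
      (Equiv.hasSum_iff (Equiv.subRight (1 : ℤ))
        (f := fun n : ℤ => ‖f n‖ ^ (2 : ENNReal).toReal)).2 h2
    have he := h1.unique h3
    rw [show (2 : ENNReal).toReal = ((2:ℕ):ℝ) by norm_num, Real.rpow_natCast,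
      Real.rpow_natCast] at he
    exact (sq_eq_sq₀ (norm_nonneg _) (norm_nonneg _)).1 he


lemma shiftU_ket (n : ℤ) : shiftU (ket n) = ket (n + 1) := by
  apply lp.ext
  funext m
  show (ket n : ∀ _ : ℤ, ℂ) (m - 1) = (ket (n + 1) : ∀ _ : ℤ, ℂ) m
  unfold ket
  rcases eq_or_ne m (n + 1) with h | h
  · subst h
    rw [lp.single_apply_self, show n + 1 - 1 = n by ring, lp.single_apply_self]
  · rw [lp.single_apply_ne _ _ _ h, lp.single_apply_ne]
    omega

lemma inner_ket_ket (m n : ℤ) : (inner ℂ (ket m) (ket n) : ℂ) = if m = n then 1 else 0 := by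
  unfold ket
  rw [lp.inner_single_left]
  rcases eq_or_ne m n with h | h
  · subst h; simp [lp.single_apply_self]
  · rw [lp.single_apply_ne (E := fun _ : ℤ => ℂ) 2 n (1:ℂ) h]
    simp [h]

/-- Example 3: the translation operator `U₊|n⟩ = |n+1⟩` is unitary, and for
the automaton `A = ({+}, {U₊}, span{|0⟩})` with `AP = {[k), (k−1], l₂}` and `k > 0`,
`A ⊨ pers [k)` holds but `A ⊨ inv [k)` fails. -/
theorem stmt9 (k : ℤ) (hk : 0 < k) :
    ∃ U : l2Z ≃ₗᵢ[ℂ] l2Z, (∀ n : ℤ, U (ket n) = ket (n + 1)) ∧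
      (let upk : Submodule ℂ l2Z :=
        (Submodule.span ℂ {x | ∃ n : ℤ, k ≤ n ∧ x = ket n}).topologicalClosure
       let downk : Submodule ℂ l2Z :=
        (Submodule.span ℂ {x | ∃ n : ℤ, n ≤ k - 1 ∧ x = ket n}).topologicalClosure
       let AP : Set (Submodule ℂ l2Z) := {upk, downk, ⊤}
       let I : Submodule ℂ l2Z := Submodule.span ℂ {ket 0}
       QPers (fun _ : Unit => U) I AP upk ∧ ¬ QInv (fun _ : Unit => U) I AP upk) := by
  refine ⟨shiftU, fun n => shiftU_ket n, ?_⟩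
  intro upk downk AP I
  have hketmem : ∀ n : ℤ, k ≤ n → ket n ∈ upk := fun n hn =>
    Submodule.le_topologicalClosure _ (Submodule.subset_span ⟨n, hn, rfl⟩)
  have hket0_not : ket 0 ∉ upk := by
    intro hmem
    set F : l2Z →L[ℂ] ℂ := innerSL ℂ (ket 0) with hF
    have hle : upk ≤ LinearMap.ker (F : l2Z →ₗ[ℂ] ℂ) := by
      apply Submodule.topologicalClosure_minimal
      · rw [Submodule.span_le]
        rintro x ⟨n, hn, rfl⟩
        simp only [SetLike.mem_coe, LinearMap.mem_ker]
        show (inner ℂ (ket 0) (ket n) : ℂ) = 0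
        rw [inner_ket_ket]
        have : (0:ℤ) ≠ n := by omega
        simp [this]
      · exact ContinuousLinearMap.isClosed_ker F
    have : F (ket 0) = 0 := hle hmem
    rw [hF] at this
    simp only [innerSL_apply_apply] at this
    rw [inner_ket_ket] at this
    simp at this
  constructor
  · -- persistence
    intro π hπ
    obtain ⟨h0, hstep⟩ := hπ
    obtain ⟨c, hc⟩ := Submodule.mem_span_singleton.1 h0
    have hall : ∀ n : ℕ, π n = c • ket n := by
      intro n
      induction n with
      | zero => simpa using hc.symm
      | succ n ih =>
        obtain ⟨α, hα⟩ := hstep n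
        rw [hα, ih, map_smul, shiftU_ket]
        norm_num
    refine ⟨k.toNat, fun n hn => ?_⟩
    have hmem : π n ∈ upk := by
      rw [hall n]
      exact Submodule.smul_mem _ _ (hketmem n (by omega))
    exact sInf_le ⟨Or.inl rfl, hmem⟩
  · -- no invariance
    intro hinv
    have h := hinv (ket 0) (Submodule.mem_span_singleton_self _) (ket 0) ⟨[], rfl⟩
    have hmem : ket 0 ∈ sInf (QLabel AP (ket 0)) := by
      rw [Submodule.mem_sInf]
      rintro Z ⟨_, hZ⟩
      exact hZ
    exact hket0_not (h hmem)
end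
end
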